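/- Suppose F : D → ℂ is holomorphic on open D ⊆ ℂ and Φ(ζ) = (1/(2πi))∮_γ F(t)(t − ζ)⁻¹ dt for ζ = x₁e₁ + ⋯ + x_k e_k ∈ Π = {ζ ∈ E_k : f(ζ) ∈ D}, γ a contour in D around f(ζ). Then Φ(ζ) = F(f(ζ)) + (b₁x₁+⋯+b_k x_k)F′(f(ζ))ρ + ((c₁x₁+⋯+c_k x_k)F′(f(ζ)) + (b₁x₁+⋯+b_k x_k)²F″(f(ζ))/2)ρ². -/

import Mathlib

noncomputable section

/-- The commutative algebra `A₃ = ℂ[ρ]/(ρ³)`, with basis `{1, ρ, ρ²}`;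
an element `⟨a, b, c⟩` represents `a + b·ρ + c·ρ²`. -/
@[ext] structure A3 : Type where
  a : ℂ
  b : ℂ
  c : ℂ

namespace A3

instance : Zero A3 := ⟨⟨0, 0, 0⟩⟩
instance : One A3 := ⟨⟨1, 0, 0⟩⟩
instance : Add A3 := ⟨fun x y => ⟨x.a + y.a, x.b + y.b, x.c + y.c⟩⟩
instance : Neg A3 := ⟨fun x => ⟨-x.a, -x.b, -x.c⟩⟩
instance : Mul A3 :=
  ⟨fun x y => ⟨x.a * y.a, x.a * y.b + x.b * y.a, x.a * y.c + x.b * y.b + x.c * y.a⟩⟩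

@[simp] lemma zero_a : (0 : A3).a = 0 := rfl
@[simp] lemma zero_b : (0 : A3).b = 0 := rfl
@[simp] lemma zero_c : (0 : A3).c = 0 := rfl
@[simp] lemma one_a : (1 : A3).a = 1 := rfl
@[simp] lemma one_b : (1 : A3).b = 0 := rfl
@[simp] lemma one_c : (1 : A3).c = 0 := rfl
@[simp] lemma add_a (x y : A3) : (x + y).a = x.a + y.a := rfl
@[simp] lemma add_b (x y : A3) : (x + y).b = x.b + y.b := rfl
@[simp] lemma add_c (x y : A3) : (x + y).c = x.c + y.c := rfl
@[simp] lemma neg_a (x : A3) : (-x).a = -x.a := rfl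
@[simp] lemma neg_b (x : A3) : (-x).b = -x.b := rfl
@[simp] lemma neg_c (x : A3) : (-x).c = -x.c := rfl
@[simp] lemma mul_a (x y : A3) : (x * y).a = x.a * y.a := rfl
@[simp] lemma mul_b (x y : A3) : (x * y).b = x.a * y.b + x.b * y.a := rfl
@[simp] lemma mul_c (x y : A3) : (x * y).c = x.a * y.c + x.b * y.b + x.c * y.a := rfl

instance : CommRing A3 where
  add_assoc x y z := by ext <;> simp <;> ring
  zero_add x := by ext <;> simp
  add_zero x := by ext <;> simp
  add_comm x y := by ext <;> simp <;> ring
  neg_add_cancel x := by ext <;> simp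
  left_distrib x y z := by ext <;> simp <;> ring
  right_distrib x y z := by ext <;> simp <;> ring
  zero_mul x := by ext <;> simp
  mul_zero x := by ext <;> simp
  mul_assoc x y z := by ext <;> simp <;> ring
  one_mul x := by ext <;> simp
  mul_one x := by ext <;> simp
  mul_comm x y := by ext <;> simp <;> ring
  nsmul := fun n x => ⟨n • x.a, n • x.b, n • x.c⟩
  nsmul_zero x := A3.ext (zero_nsmul x.a) (zero_nsmul x.b) (zero_nsmul x.c)
  nsmul_succ n x := A3.ext (succ_nsmul x.a n) (succ_nsmul x.b n) (succ_nsmul x.c n)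
  zsmul := fun n x => ⟨n • x.a, n • x.b, n • x.c⟩
  zsmul_zero' x := A3.ext (SubNegMonoid.zsmul_zero' x.a) (SubNegMonoid.zsmul_zero' x.b) (SubNegMonoid.zsmul_zero' x.c)
  zsmul_succ' n x := A3.ext (SubNegMonoid.zsmul_succ' n x.a) (SubNegMonoid.zsmul_succ' n x.b) (SubNegMonoid.zsmul_succ' n x.c)
  zsmul_neg' n x := A3.ext (SubNegMonoid.zsmul_neg' n x.a) (SubNegMonoid.zsmul_neg' n x.b) (SubNegMonoid.zsmul_neg' n x.c)

/-- The canonical embedding `ℂ → A₃`. -/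
def toA3 : ℂ →+* A3 where
  toFun r := ⟨r, 0, 0⟩
  map_one' := rfl
  map_mul' x y := by ext <;> simp
  map_zero' := rfl
  map_add' x y := by ext <;> simp

instance : Algebra ℂ A3 := toA3.toAlgebra
instance : Algebra ℝ A3 := (toA3.comp (algebraMap ℝ ℂ)).toAlgebra

@[simp] lemma smulC_a (r : ℂ) (x : A3) : (r • x).a = r * x.a := by
  show (toA3 r * x).a = _ ; simp [toA3]
@[simp] lemma smulC_b (r : ℂ) (x : A3) : (r • x).b = r * x.b := by
  show (toA3 r * x).b = _ ; simp [toA3]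
@[simp] lemma smulC_c (r : ℂ) (x : A3) : (r • x).c = r * x.c := by
  show (toA3 r * x).c = _ ; simp [toA3]
@[simp] lemma smulR_a (r : ℝ) (x : A3) : (r • x).a = (r : ℂ) * x.a := by
  show ((toA3.comp (algebraMap ℝ ℂ)) r * x).a = _ ; simp [toA3]
@[simp] lemma smulR_b (r : ℝ) (x : A3) : (r • x).b = (r : ℂ) * x.b := by
  show ((toA3.comp (algebraMap ℝ ℂ)) r * x).b = _ ; simp [toA3]
@[simp] lemma smulR_c (r : ℝ) (x : A3) : (r • x).c = (r : ℂ) * x.c := by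
  show ((toA3.comp (algebraMap ℝ ℂ)) r * x).c = _ ; simp [toA3]

/-- The nilpotent generator `ρ`. -/
def ρ : A3 := ⟨0, 1, 0⟩

lemma rho_sq : ρ ^ 2 = ⟨0, 0, 1⟩ := by ext <;> simp [ρ, sq]
lemma rho_cubed : ρ ^ 3 = 0 := by ext <;> simp [ρ, pow_succ, sq]

/-- The element `a + b·ρ + c·ρ²` of `A₃`. -/
def el (a b c : ℂ) : A3 := algebraMap ℂ A3 a + b • ρ + c • ρ ^ 2

lemma el_def (a b c : ℂ) : el a b c = ⟨a, b, c⟩ := by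
  simp only [el, rho_sq]; ext <;> simp [ρ] <;> simp [Algebra.algebraMap_eq_smul_one, toA3]

/-- The Euclidean norm `‖a + bρ + cρ²‖ = √(|a|² + |b|² + |c|²)`. -/
def nrm (x : A3) : ℝ :=
  Real.sqrt (‖x.a‖ ^ 2 + ‖x.b‖ ^ 2 + ‖x.c‖ ^ 2)

/-- The topology of `A₃` (that of the Euclidean norm, i.e. of `ℂ³`). -/
instance : TopologicalSpace A3 :=
  TopologicalSpace.induced (fun x => (x.a, x.b, x.c)) inferInstance

/-- The functional `f(a + bρ + cρ²) = a`. -/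
def fl (x : A3) : ℂ := x.a

/-- The set `I = {λ₁ρ + λ₂ρ² : λ₁, λ₂ ∈ ℂ}`. -/
def Iset : Set A3 := {x | ∃ l₁ l₂ : ℂ, x = l₁ • ρ + l₂ • ρ ^ 2}

/-- The kernel of `f`, i.e. the ideal `I`, as a real subspace of `A₃`. -/
def Iker : Submodule ℝ A3 where
  carrier := {x | x.a = 0}
  add_mem' := by intro x y hx hy; simp_all [Set.mem_setOf_eq]
  zero_mem' := rfl
  smul_mem' := by intro r x hx; simp_all [Set.mem_setOf_eq]

/-- Componentwise contour integral over the circle `C(center, r)` of an `A₃`-valued function. -/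
def cInt (g : ℂ → A3) (center : ℂ) (r : ℝ) : A3 :=
  ⟨∮ z in C(center, r), (g z).a, ∮ z in C(center, r), (g z).b, ∮ z in C(center, r), (g z).c⟩

end A3

open Complex Metric circleIntegral

namespace A3

@[simp] lemma sub_a (x y : A3) : (x - y).a = x.a - y.a := by
  rw [sub_eq_add_neg, sub_eq_add_neg]; simp
@[simp] lemma sub_b (x y : A3) : (x - y).b = x.b - y.b := by
  rw [sub_eq_add_neg, sub_eq_add_neg]; simp
@[simp] lemma sub_c (x y : A3) : (x - y).c = x.c - y.c := by
  rw [sub_eq_add_neg, sub_eq_add_neg]; simp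

def aHom : A3 →+ ℂ := { toFun := fun x => x.a, map_zero' := rfl, map_add' := fun _ _ => rfl }
def bHom : A3 →+ ℂ := { toFun := fun x => x.b, map_zero' := rfl, map_add' := fun _ _ => rfl }
def cHom : A3 →+ ℂ := { toFun := fun x => x.c, map_zero' := rfl, map_add' := fun _ _ => rfl }

lemma sum_a {k : ℕ} (f : Fin k → A3) : (∑ j, f j).a = ∑ j, (f j).a := map_sum aHom f Finset.univ
lemma sum_b {k : ℕ} (f : Fin k → A3) : (∑ j, f j).b = ∑ j, (f j).b := map_sum bHom f Finset.univ
lemma sum_c {k : ℕ} (f : Fin k → A3) : (∑ j, f j).c = ∑ j, (f j).c := map_sum cHom f Finset.univ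

lemma ring_inverse_eq (α β γ : ℂ) (hα : α ≠ 0) :
    Ring.inverse (⟨α, β, γ⟩ : A3) =
      ⟨α⁻¹, -β * (α⁻¹) ^ 2, β ^ 2 * (α⁻¹) ^ 3 - γ * (α⁻¹) ^ 2⟩ := by
  have h : (⟨α, β, γ⟩ : A3) * ⟨α⁻¹, -β * (α⁻¹) ^ 2, β ^ 2 * (α⁻¹) ^ 3 - γ * (α⁻¹) ^ 2⟩ = 1 := by
    ext <;> simp <;> field_simp <;> ring
  have h' : (⟨α⁻¹, -β * (α⁻¹) ^ 2, β ^ 2 * (α⁻¹) ^ 3 - γ * (α⁻¹) ^ 2⟩ : A3) * ⟨α, β, γ⟩ = 1 := by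
    rw [mul_comm]; exact h
  exact Ring.inverse_unit ⟨_, _, h, h'⟩

end A3

lemma circleIntegral_add' {f g : ℂ → ℂ} {c : ℂ} {R : ℝ} (hf : CircleIntegrable f c R)
    (hg : CircleIntegrable g c R) :
    (∮ z in C(c, R), (f z + g z)) = (∮ z in C(c, R), f z) + ∮ z in C(c, R), g z := by
  simp only [circleIntegral, smul_add, intervalIntegral.integral_add hf.out hg.out]

/-- expansion of the main extension `(1/2πi)∮ F(t)(t − ζ)⁻¹ dt` in the
basis `{1, ρ, ρ²}` for `ζ = Σ x_j e_j`. -/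
theorem stmt16 (k : ℕ) (av bv cv : Fin k → ℂ) (e : Fin k → A3)
    (he : ∀ j, e j = A3.el (av j) (bv j) (cv j))
    (D : Set ℂ) (hD : IsOpen D) (F : ℂ → ℂ) (hF : DifferentiableOn ℂ F D)
    (x : Fin k → ℝ) (ζ : A3) (hζ : ζ = ∑ j, x j • e j)
    (r : ℝ) (hr : 0 < r) (hball : Metric.closedBall (A3.fl ζ) r ⊆ D) :
    (2 * Real.pi * Complex.I : ℂ)⁻¹ •
      A3.cInt (fun t => F t • Ring.inverse (A3.toA3 t - ζ)) (A3.fl ζ) r =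
    A3.el (F (A3.fl ζ))
      ((∑ j, (x j : ℂ) * bv j) * deriv F (A3.fl ζ))
      ((∑ j, (x j : ℂ) * cv j) * deriv F (A3.fl ζ) +
        (∑ j, (x j : ℂ) * bv j) ^ 2 / 2 * deriv (deriv F) (A3.fl ζ)) := by
  classical
  have hζa : ζ.a = ∑ j, (x j : ℂ) * av j := by
    rw [hζ, A3.sum_a]
    refine Finset.sum_congr rfl fun j _ => ?_
    rw [he j, A3.el_def]; simp
  have hζb : ζ.b = ∑ j, (x j : ℂ) * bv j := by
    rw [hζ, A3.sum_b]
    refine Finset.sum_congr rfl fun j _ => ?_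
    rw [he j, A3.el_def]; simp
  have hζc : ζ.c = ∑ j, (x j : ℂ) * cv j := by
    rw [hζ, A3.sum_c]
    refine Finset.sum_congr rfl fun j _ => ?_
    rw [he j, A3.el_def]; simp
  set c : ℂ := A3.fl ζ with hc
  have h2pi : (2 * Real.pi * Complex.I : ℂ) ≠ 0 := by
    simp [Real.pi_ne_zero, Complex.I_ne_zero]
  obtain ⟨R, rfl⟩ : ∃ R : NNReal, (R : ℝ) = r := ⟨⟨r, hr.le⟩, rfl⟩
  have hR : 0 < R := by exact_mod_cast hr
  have hRr : (0:ℝ) ≤ (R:ℝ) := R.2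
  have hd : DifferentiableOn ℂ F (Metric.closedBall c R) := hF.mono hball
  have hp := hd.hasFPowerSeriesOnBall hR
  have hFc : ContinuousOn F (Metric.sphere c (R:ℝ)) :=
    hd.continuousOn.mono Metric.sphere_subset_closedBall
  have hne : ∀ z ∈ Metric.sphere c (R:ℝ), z - c ≠ 0 := by
    intro z hz h0
    rw [Metric.mem_sphere, dist_eq, h0] at hz
    simp at hz
    exact hr.ne' (by rw [← hz])
  have hint : ∀ n : ℕ, CircleIntegrable (fun z => (z - c)⁻¹ ^ (n + 1) * F z) c R := by
    intro n
    refine ContinuousOn.circleIntegrable hRr ?_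
    exact (((continuousOn_id.sub continuousOn_const).inv₀ hne).pow _).mul hFc
  have key : ∀ n : ℕ, (∮ z in C(c, (R : ℝ)), (z - c)⁻¹ ^ (n + 1) * F z) =
      (2 * Real.pi * Complex.I) * ((n.factorial : ℂ)⁻¹ * iteratedDeriv n F c) := by
    intro n
    have h1 := hp.factorial_smul 1 n
    rw [← iteratedDeriv_eq_iteratedFDeriv] at h1
    have h2 := cauchyPowerSeries_apply F c R n 1
    have e1 : (∮ z in C(c, (R : ℝ)), (z - c)⁻¹ ^ (n + 1) * F z)
        = ∮ z in C(c, (R : ℝ)), ((1 : ℂ) / (z - c)) ^ n • ((z - c)⁻¹ • F z) := by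
      refine circleIntegral.integral_congr hRr fun z hz => ?_
      simp only [smul_eq_mul, one_div, pow_succ]
      ring
    have h3 : (cauchyPowerSeries F c R n fun _ => (1 : ℂ)) =
        (2 * Real.pi * Complex.I : ℂ)⁻¹ * ∮ z in C(c, (R : ℝ)), (z - c)⁻¹ ^ (n + 1) * F z := by
      rw [h2, e1]; simp [smul_eq_mul]
    have h4 : (n.factorial : ℂ) * ((2 * Real.pi * Complex.I : ℂ)⁻¹ *
        ∮ z in C(c, (R : ℝ)), (z - c)⁻¹ ^ (n + 1) * F z) = iteratedDeriv n F c := by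
      rw [← h3, ← h1, nsmul_eq_mul]
    have hn : (n.factorial : ℂ) ≠ 0 := by exact_mod_cast Nat.factorial_ne_zero n
    rw [← h4]
    field_simp
  have k0 : (∮ z in C(c, (R : ℝ)), (z - c)⁻¹ ^ 1 * F z)
      = (2 * Real.pi * Complex.I) * F c := by
    rw [key 0]; simp [iteratedDeriv_zero]
  have k1 : (∮ z in C(c, (R : ℝ)), (z - c)⁻¹ ^ 2 * F z)
      = (2 * Real.pi * Complex.I) * deriv F c := by
    rw [key 1]; simp [iteratedDeriv_one]
  have hit2 : iteratedDeriv 2 F c = deriv (deriv F) c := by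
    rw [iteratedDeriv_succ, iteratedDeriv_one]
  have k2 : (∮ z in C(c, (R : ℝ)), (z - c)⁻¹ ^ 3 * F z)
      = (2 * Real.pi * Complex.I) * ((2:ℂ)⁻¹ * deriv (deriv F) c) := by
    rw [key 2, hit2]; norm_num [Nat.factorial]
  -- integrand in components on the sphere
  have hEq : Set.EqOn (fun t => F t • Ring.inverse (A3.toA3 t - ζ))
      (fun t => (⟨(t - c)⁻¹ ^ 1 * F t,
                  ζ.b * ((t - c)⁻¹ ^ 2 * F t),
                  ζ.c * ((t - c)⁻¹ ^ 2 * F t) + ζ.b ^ 2 * ((t - c)⁻¹ ^ 3 * F t)⟩ : A3))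
      (Metric.sphere c (R:ℝ)) := by
    intro t ht
    have htc : t - c ≠ 0 := hne t ht
    show F t • Ring.inverse (A3.toA3 t - ζ) = _
    have hsub : A3.toA3 t - ζ = ⟨t - c, -ζ.b, -ζ.c⟩ := by
      ext <;> simp [A3.toA3, hc, A3.fl]
    rw [hsub, A3.ring_inverse_eq _ _ _ htc]
    ext <;> simp <;> ring
  have hintm : ∀ (a : ℂ) (n : ℕ), CircleIntegrable (fun z => a * ((z - c)⁻¹ ^ (n + 1) * F z)) c R := by
    intro a n
    refine ContinuousOn.circleIntegrable hRr ?_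
    exact continuousOn_const.mul ((((continuousOn_id.sub continuousOn_const).inv₀ hne).pow _).mul hFc)
  have ea : (∮ z in C(c, (R:ℝ)), ((F z • Ring.inverse (A3.toA3 z - ζ)).a))
      = ∮ z in C(c, (R:ℝ)), (z - c)⁻¹ ^ 1 * F z :=
    circleIntegral.integral_congr hRr fun z hz => congrArg A3.a (hEq hz)
  have eb : (∮ z in C(c, (R:ℝ)), ((F z • Ring.inverse (A3.toA3 z - ζ)).b))
      = ζ.b * ∮ z in C(c, (R:ℝ)), (z - c)⁻¹ ^ 2 * F z := by
    rw [circleIntegral.integral_congr hRr fun z hz => congrArg A3.b (hEq hz)]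
    exact circleIntegral.integral_const_mul _ _ _ _
  have ec : (∮ z in C(c, (R:ℝ)), ((F z • Ring.inverse (A3.toA3 z - ζ)).c))
      = ζ.c * (∮ z in C(c, (R:ℝ)), (z - c)⁻¹ ^ 2 * F z) +
        ζ.b ^ 2 * ∮ z in C(c, (R:ℝ)), (z - c)⁻¹ ^ 3 * F z := by
    rw [circleIntegral.integral_congr hRr fun z hz => congrArg A3.c (hEq hz)]
    rw [circleIntegral_add' (hintm ζ.c 1) (hintm (ζ.b ^ 2) 2)]
    rw [circleIntegral.integral_const_mul, circleIntegral.integral_const_mul]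
  rw [A3.el_def]
  ext
  · rw [A3.smulC_a]
    show (2 * Real.pi * Complex.I : ℂ)⁻¹ *
      (∮ z in C(c, (R:ℝ)), ((F z • Ring.inverse (A3.toA3 z - ζ)).a)) = _
    rw [ea, k0]
    field_simp
  · rw [A3.smulC_b]
    show (2 * Real.pi * Complex.I : ℂ)⁻¹ *
      (∮ z in C(c, (R:ℝ)), ((F z • Ring.inverse (A3.toA3 z - ζ)).b)) = _
    rw [eb, k1, ← hζb]
    field_simp
  · rw [A3.smulC_c]
    show (2 * Real.pi * Complex.I : ℂ)⁻¹ *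
      (∮ z in C(c, (R:ℝ)), ((F z • Ring.inverse (A3.toA3 z - ζ)).c)) = _
    rw [ec, k1, k2, ← hζb, ← hζc]
    field_simp
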